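/- Let m ≥ 2 and y₀,...,y_{m-1} > 0. The moving geometric mean sequence defined by y_{n+m} = (y_{n+m-1} ··· y_n)^{1/m} converges to (∏_{j=0}^{m-1} y_j^{j+1})^{2/(m(m+1))}. -/

import Mathlib

open Filter

private lemma sum_aux_19 (m : ℕ) : ∑ i ∈ Finset.range m, ((i:ℝ)+1) = m*(m+1)/2 := by
  induction m with
  | zero => simp
  | succ k ih => rw [Finset.sum_range_succ, ih]; push_cast; ring

/-- The moving geometric mean converges to the weighted geometric mean
(∏ y_j^{j+1})^{2/(m(m+1))}. -/
theorem stmt_19 (m : ℕ) (hm : 2 ≤ m) (y : ℕ → ℝ)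
    (hpos : ∀ j, j < m → 0 < y j)
    (hrec : ∀ n : ℕ, y (n + m) = (∏ i ∈ Finset.range m, y (n + i)) ^ (1 / (m : ℝ))) :
    Tendsto y atTop
      (nhds ((∏ j ∈ Finset.range m, y j ^ ((j : ℝ) + 1)) ^
        (2 / ((m : ℝ) * ((m : ℝ) + 1))))) := by
  have hm0 : 0 < m := by omega
  have hmR : (0:ℝ) < m := by exact_mod_cast hm0
  have hm1R : (1:ℝ) ≤ m := by exact_mod_cast hm0
  have hne : (Finset.range m).Nonempty := ⟨0, Finset.mem_range.mpr hm0⟩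
  have hposall : ∀ n, 0 < y n := by
    intro n
    induction n using Nat.strong_induction_on with
    | _ n ih =>
      rcases lt_or_ge n m with h | h
      · exact hpos n h
      · obtain ⟨k, rfl⟩ : ∃ k, n = k + m := ⟨n - m, by omega⟩
        rw [hrec k]
        exact Real.rpow_pos_of_pos
          (Finset.prod_pos fun i hi => ih (k+i) (by simp only [Finset.mem_range] at hi; omega)) _
  set x : ℕ → ℝ := fun n => Real.log (y n) with hx
  have hxrec : ∀ n, (m:ℝ) * x (n + m) = ∑ i ∈ Finset.range m, x (n + i) := by
    intro n
    have h1 : x (n+m) = (1/(m:ℝ)) * ∑ i ∈ Finset.range m, x (n+i) := by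
      simp only [hx, hrec n]
      rw [Real.log_rpow (Finset.prod_pos fun i _ => hposall _),
        Real.log_prod (fun i _ => (hposall _).ne')]
    rw [h1, ← mul_assoc, mul_one_div, div_self hmR.ne', one_mul]
  set M : ℕ → ℝ := fun n => (Finset.range m).sup' hne (fun i => x (n+i)) with hM
  set I : ℕ → ℝ := fun n => (Finset.range m).inf' hne (fun i => x (n+i)) with hI
  have hMd : ∀ n, M n = (Finset.range m).sup' hne (fun i => x (n+i)) := fun n => by rw [hM]
  have hId : ∀ n, I n = (Finset.range m).inf' hne (fun i => x (n+i)) := fun n => by rw [hI]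
  have hxM : ∀ n i, i < m → x (n+i) ≤ M n := by
    intro n i hi
    rw [hMd]
    exact Finset.le_sup' (fun j => x (n+j)) (Finset.mem_range.mpr hi)
  have hIx : ∀ n i, i < m → I n ≤ x (n+i) := by
    intro n i hi
    rw [hId]
    exact Finset.inf'_le (fun j => x (n+j)) (Finset.mem_range.mpr hi)
  have hIM : ∀ n, I n ≤ M n := fun n => le_trans (hIx n 0 hm0) (hxM n 0 hm0)
  have hsum_ub : ∀ n, ∑ i ∈ Finset.range m, x (n+i) ≤ m * M n := by
    intro n
    calc ∑ i ∈ Finset.range m, x (n+i) ≤ (Finset.range m).card • M n :=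
      Finset.sum_le_card_nsmul _ _ _ (fun i hi => hxM n i (Finset.mem_range.mp hi))
    _ = m * M n := by simp [nsmul_eq_mul]
  have hsum_lb : ∀ n, (m:ℝ) * I n ≤ ∑ i ∈ Finset.range m, x (n+i) := by
    intro n
    calc (m:ℝ) * I n = (Finset.range m).card • I n := by simp [nsmul_eq_mul]
    _ ≤ _ := Finset.card_nsmul_le_sum _ _ _ (fun i hi => hIx n i (Finset.mem_range.mp hi))
  have hxmM : ∀ n, x (n+m) ≤ M n := by
    intro n
    have h := hsum_ub n
    rw [← hxrec n] at h
    nlinarith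
  have hIxm : ∀ n, I n ≤ x (n+m) := by
    intro n
    have h := hsum_lb n
    rw [← hxrec n] at h
    nlinarith
  have hManti : Antitone M := by
    apply antitone_nat_of_succ_le
    intro n
    rw [hMd (n+1)]
    apply Finset.sup'_le
    intro i hi
    rw [Finset.mem_range] at hi
    rcases lt_or_ge (i+1) m with h | h
    · have e : n + 1 + i = n + (i+1) := by omega
      rw [e]; exact hxM n _ h
    · have e : n + 1 + i = n + m := by omega
      rw [e]; exact hxmM n
  have hImono : Monotone I := by
    apply monotone_nat_of_le_succ
    intro n
    rw [hId (n+1)]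
    apply Finset.le_inf'
    intro i hi
    rw [Finset.mem_range] at hi
    rcases lt_or_ge (i+1) m with h | h
    · have e : n + 1 + i = n + (i+1) := by omega
      rw [e]; exact hIx n _ h
    · have e : n + 1 + i = n + m := by omega
      rw [e]; exact hIxm n
  have hMbdd : BddBelow (Set.range M) :=
    ⟨I 0, by rintro _ ⟨n, rfl⟩; exact le_trans (hImono (Nat.zero_le n)) (hIM n)⟩
  have hIbdd : BddAbove (Set.range I) :=
    ⟨M 0, by rintro _ ⟨n, rfl⟩; exact le_trans (hIM n) (hManti (Nat.zero_le n))⟩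
  set L : ℝ := ⨅ n, M n with hL
  set μ : ℝ := ⨆ n, I n with hμ
  have hMtend : Tendsto M atTop (nhds L) := tendsto_atTop_ciInf hManti hMbdd
  have hItend : Tendsto I atTop (nhds μ) := tendsto_atTop_ciSup hImono hIbdd
  have hμL : μ ≤ L := le_of_tendsto_of_tendsto' hItend hMtend hIM
  have hkey : ∀ w, (m:ℝ) * x (w+m) ≤ ((m:ℝ)-1) * M w + I w := by
    intro w
    obtain ⟨i₀, hi₀, hinf⟩ := Finset.exists_mem_eq_inf' hne (fun i => x (w+i))
    rw [← hId] at hinf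
    rw [hxrec w, ← Finset.add_sum_erase _ _ hi₀]
    have h1 : ∑ i ∈ (Finset.range m).erase i₀, x (w+i) ≤ ((Finset.range m).erase i₀).card • M w :=
      Finset.sum_le_card_nsmul _ _ _
        (fun i hi => hxM w i (Finset.mem_range.mp (Finset.mem_of_mem_erase hi)))
    have hcard : ((Finset.range m).erase i₀).card = m - 1 := by
      rw [Finset.card_erase_of_mem hi₀, Finset.card_range]
    rw [hcard, nsmul_eq_mul] at h1
    have hm1 : ((m-1 : ℕ) : ℝ) = (m:ℝ) - 1 := by
      push_cast [Nat.cast_sub (by omega : 1 ≤ m)]; ring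
    rw [hm1] at h1
    have hIi : x (w + i₀) = I w := hinf.symm
    linarith
  have hMcontr : ∀ n, M (n+m) ≤ (((m:ℝ)-1) * M n + μ) / m := by
    intro n
    rw [hMd (n+m)]
    apply Finset.sup'_le
    intro i hi
    rw [Finset.mem_range] at hi
    have e : n + m + i = (n+i) + m := by omega
    rw [e, le_div_iff₀ hmR]
    have h1 := hkey (n+i)
    have h2 : M (n+i) ≤ M n := hManti (Nat.le_add_right n i)
    have h3 : I (n+i) ≤ μ := le_ciSup hIbdd (n+i)
    nlinarith [mul_le_mul_of_nonneg_left h2 (by linarith : (0:ℝ) ≤ (m:ℝ)-1)]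
  have hLle : L ≤ (((m:ℝ)-1) * L + μ)/m := by
    have t1 : Tendsto (fun n => M (n+m)) atTop (nhds L) :=
      hMtend.comp (tendsto_add_atTop_nat m)
    have t2 : Tendsto (fun n => (((m:ℝ)-1) * M n + μ)/m) atTop
        (nhds ((((m:ℝ)-1)*L + μ)/m)) :=
      ((hMtend.const_mul _).add_const μ).div_const m
    exact le_of_tendsto_of_tendsto' t1 t2 hMcontr
  have hLμ : L = μ := by
    rw [le_div_iff₀ hmR] at hLle
    nlinarith
  have hxtend : Tendsto x atTop (nhds L) := by
    have h1 : ∀ n, I n ≤ x n := fun n => by simpa using hIx n 0 hm0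
    have h2 : ∀ n, x n ≤ M n := fun n => by simpa using hxM n 0 hm0
    exact tendsto_of_tendsto_of_tendsto_of_le_of_le (hLμ ▸ hItend) hMtend h1 h2
  set S : ℕ → ℝ := fun n => ∑ i ∈ Finset.range m, ((i:ℝ)+1) * x (n+i) with hS
  have hSsucc : ∀ n, S (n+1) = S n := by
    intro n
    have key : ∑ i ∈ Finset.range (m+1), (i:ℝ) * x (n+i) = S (n+1) := by
      rw [Finset.sum_range_succ']
      simp only [Nat.cast_zero, zero_mul, add_zero, hS]
      apply Finset.sum_congr rfl
      intro i _
      have e : n + (i+1) = n + 1 + i := by omega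
      push_cast [e]
      ring
    rw [← key, Finset.sum_range_succ, hxrec n, hS, ← Finset.sum_add_distrib]
    apply Finset.sum_congr rfl
    intro i _; ring
  have hSconst : ∀ n, S n = S 0 := by
    intro n; induction n with
    | zero => rfl
    | succ k ih => rw [hSsucc k, ih]
  have hStend1 : Tendsto S atTop (nhds (S 0)) := by
    have : S = fun _ => S 0 := funext hSconst
    rw [this]; exact tendsto_const_nhds
  have hStend2 : Tendsto S atTop (nhds ((m:ℝ)*((m:ℝ)+1)/2 * L)) := by
    have h : Tendsto S atTop (nhds (∑ i ∈ Finset.range m, ((i:ℝ)+1) * L)) := by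
      apply tendsto_finset_sum
      intro i _
      exact (hxtend.comp (tendsto_add_atTop_nat i)).const_mul _
    rwa [← Finset.sum_mul, sum_aux_19 m] at h
  have hS0 : S 0 = (m:ℝ)*((m:ℝ)+1)/2 * L := tendsto_nhds_unique hStend1 hStend2
  -- identify the target value
  set T : ℝ := (∏ j ∈ Finset.range m, y j ^ ((j : ℝ) + 1)) ^ (2 / ((m : ℝ) * ((m : ℝ) + 1)))
    with hT
  have hbasepos : 0 < ∏ j ∈ Finset.range m, y j ^ ((j : ℝ) + 1) :=
    Finset.prod_pos fun j hj => Real.rpow_pos_of_pos (hposall j) _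
  have hTpos : 0 < T := Real.rpow_pos_of_pos hbasepos _
  have hlogT : Real.log T = L := by
    rw [hT, Real.log_rpow hbasepos, Real.log_prod
      (fun j _ => (Real.rpow_pos_of_pos (hposall j) _).ne')]
    have e : ∑ j ∈ Finset.range m, Real.log (y j ^ ((j:ℝ)+1))
        = ∑ j ∈ Finset.range m, ((j:ℝ)+1) * x j := by
      apply Finset.sum_congr rfl
      intro j _
      rw [Real.log_rpow (hposall j)]
    rw [e]
    have e2 : ∑ j ∈ Finset.range m, ((j:ℝ)+1) * x j = S 0 := by
      rw [hS]
      apply Finset.sum_congr rfl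
      intro j _
      rw [Nat.zero_add]
    rw [e2, hS0]
    field_simp
  have hTexp : T = Real.exp L := by rw [← hlogT, Real.exp_log hTpos]
  have hy : (fun n => Real.exp (x n)) = y := funext fun n => Real.exp_log (hposall n)
  have hfinal : Tendsto (fun n => Real.exp (x n)) atTop (nhds (Real.exp L)) :=
    (Real.continuous_exp.tendsto L).comp hxtend
  rw [hy, ← hTexp] at hfinal
  exact hfinal
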